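/- Fix real numbers α₁, α₂ ≥ 0 and b ≥ 0 (b playing the role of β/(1−β)). For K, L even natural numbers define M_{K,L} = ∑_{k=0}^{K/2} ∑_{l=0}^{L/2} (K!/((2k)!(K/2−k)!2^{K/2−k})) · (L!/((2l)!(L/2−l)!2^{L/2−l})) · (2(k+l)−1)!! · b^{k+l} · α₁^k α₂^l, and for K, L odd define M_{K,L} = ∑_{k=0}^{(K−1)/2} ∑_{l=0}^{(L−1)/2} (K!/((2k+1)!((K−1)/2−k)!2^{(K−1)/2−k})) · (L!/((2l+1)!((L−1)/2−l)!2^{(L−1)/2−l})) · (2(k+l)+1)!! · b^{k+l+1} · α₁^{k+1/2} α₂^{l+1/2}. Then for all even K, L ∈ ℕ₀ the recursion M_{K,L+2} = K·M_{1,1}·M_{K−1,L+1} + (L+1)·M_{0,2}·M_{K,L} holds, where M_{1,1} = √(α₁α₂)·b and M_{0,2} = 1 + α₂b. -/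

import Mathlib

open Nat Finset

noncomputable section

/-- The limiting mixed moments `M_{K,L}` of the normalized group sums in the two-group
Curie–Weiss model, with group proportions `a1, a2` and `b = β/(1−β)`: for `K, L` both even
`M_{K,L} = ∑_{k=0}^{K/2} ∑_{l=0}^{L/2} (K!/((2k)!(K/2−k)!2^{K/2−k}))
(L!/((2l)!(L/2−l)!2^{L/2−l})) (2(k+l)−1)!! b^{k+l} a1^k a2^l`,
and for `K, L` both odd
`M_{K,L} = ∑_{k=0}^{(K−1)/2} ∑_{l=0}^{(L−1)/2} (K!/((2k+1)!((K−1)/2−k)!2^{(K−1)/2−k}))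
(L!/((2l+1)!((L−1)/2−l)!2^{(L−1)/2−l})) (2(k+l)+1)!! b^{k+l+1} a1^{k+1/2} a2^{l+1/2}`. -/
def Mlim (a1 a2 b : ℝ) (K L : ℕ) : ℝ :=
  if Even K ∧ Even L then
    ∑ k ∈ Finset.range (K / 2 + 1), ∑ l ∈ Finset.range (L / 2 + 1),
      (K ! : ℝ) / (((2 * k)! : ℝ) * ((K / 2 - k)! : ℝ) * 2 ^ (K / 2 - k)) *
        ((L ! : ℝ) / (((2 * l)! : ℝ) * ((L / 2 - l)! : ℝ) * 2 ^ (L / 2 - l))) *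
        ((2 * (k + l) - 1)‼ : ℝ) * b ^ (k + l) * a1 ^ k * a2 ^ l
  else
    ∑ k ∈ Finset.range ((K - 1) / 2 + 1), ∑ l ∈ Finset.range ((L - 1) / 2 + 1),
      (K ! : ℝ) / (((2 * k + 1)! : ℝ) * (((K - 1) / 2 - k)! : ℝ) * 2 ^ ((K - 1) / 2 - k)) *
        ((L ! : ℝ) / (((2 * l + 1)! : ℝ) * (((L - 1) / 2 - l)! : ℝ) * 2 ^ ((L - 1) / 2 - l))) *
        ((2 * (k + l) + 1)‼ : ℝ) * b ^ (k + l + 1) *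
        (Real.sqrt a1 * a1 ^ k) * (Real.sqrt a2 * a2 ^ l)

lemma dd_succ (s : ℕ) : (((2*(s+1) - 1)‼ : ℕ) : ℝ) = (2*s+1) * (((2*s - 1)‼ : ℕ) : ℝ) := by
  cases s with
  | zero => norm_num
  | succ t =>
    have h1 : 2*(t+1+1) - 1 = (2*t+1)+2 := by omega
    have h2 : 2*(t+1) - 1 = 2*t+1 := by omega
    rw [h1, h2, Nat.doubleFactorial_add_two]
    push_cast; ring

lemma fact_cast_succ (x : ℕ) : (((x+1)! : ℕ) : ℝ) = (x+1) * ((x ! : ℕ) : ℝ) := by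
  rw [Nat.factorial_succ]; push_cast; ring

def Fv (a1 a2 b : ℝ) (m n k l : ℕ) : ℝ :=
  ((2*m)! : ℝ) / (((2 * k)! : ℝ) * ((m - k)! : ℝ) * 2 ^ (m - k)) *
    (((2*n)! : ℝ) / (((2 * l)! : ℝ) * ((n - l)! : ℝ) * 2 ^ (n - l))) *
    ((2 * (k + l) - 1)‼ : ℝ) * b ^ (k + l) * a1 ^ k * a2 ^ l

def Tv (a1 a2 b : ℝ) (m n k l : ℕ) : ℝ :=
  (2*k) * (((2*m)! : ℝ) / (((2 * k)! : ℝ) * ((m - k)! : ℝ) * 2 ^ (m - k))) *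
    (((2*n+1)! : ℝ) / (((2 * l + 1)! : ℝ) * ((n - l)! : ℝ) * 2 ^ (n - l))) *
    ((2 * (k + l) - 1)‼ : ℝ) * b ^ (k + l + 1) * a1 ^ k * a2 ^ (l+1)

def Rv (a1 a2 b : ℝ) (m n k l : ℕ) : ℝ :=
  (2*m) * (((2*m - 1)! : ℝ) / (((2 * k + 1)! : ℝ) * ((m - 1 - k)! : ℝ) * 2 ^ (m - 1 - k))) *
    (((2*n+1)! : ℝ) / (((2 * l + 1)! : ℝ) * ((n - l)! : ℝ) * 2 ^ (n - l))) *
    ((2 * (k + l) + 1)‼ : ℝ) * b ^ (k + l + 2) * a1 ^ (k+1) * a2 ^ (l+1)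

lemma cell0 (a1 a2 b : ℝ) (m n k : ℕ) :
    Fv a1 a2 b m (n+1) k 0 = (2*n+1) * Fv a1 a2 b m n k 0 := by
  unfold Fv
  rw [show 2*(n+1) = (2*n+1)+1 from by ring, fact_cast_succ, fact_cast_succ (2*n)]
  simp only [Nat.sub_zero]
  rw [fact_cast_succ n, show ((2:ℝ))^(n+1) = 2*2^n from by ring]
  have hf1 : ((n ! : ℕ) : ℝ) ≠ 0 := Nat.cast_ne_zero.mpr (Nat.factorial_ne_zero n)
  have hf2 : ((2:ℝ)^n) ≠ 0 := by positivity
  field_simp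
  push_cast; ring

lemma cell (a1 a2 b : ℝ) (m n k l : ℕ) (hl : l ≤ n) :
    Fv a1 a2 b m (n+1) k (l+1)
      = Tv a1 a2 b m n k l
        + (if l < n then (2*n+1) * Fv a1 a2 b m n k (l+1) else 0)
        + (2*n+1) * (a2*b) * Fv a1 a2 b m n k l := by
  have hc2 : (((2*l)! : ℕ) : ℝ) ≠ 0 := Nat.cast_ne_zero.mpr (Nat.factorial_ne_zero _)
  rcases Nat.lt_or_ge l n with h | h
  · obtain ⟨e, rfl⟩ : ∃ e, n = l + 1 + e := ⟨n - (l+1), by omega⟩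
    rw [if_pos h]
    unfold Fv Tv
    simp only [show l+1+e+1 - (l+1) = e+1 from by omega,
      show l+1+e - (l+1) = e from by omega,
      show l+1+e - l = e+1 from by omega,
      show k + (l+1) = k + l + 1 from by omega]
    rw [dd_succ (k+l)]
    rw [show 2*(l+1+e+1) = (2*(l+1+e)+1)+1 from by ring, fact_cast_succ,
      fact_cast_succ (2*(l+1+e))]
    rw [show 2*(l+1) = (2*l+1)+1 from by ring, fact_cast_succ, fact_cast_succ (2*l)]
    rw [fact_cast_succ e, show ((2:ℝ))^(e+1) = 2*2^e from by ring]
    have hc1 : (((2*(l+1+e))! : ℕ) : ℝ) ≠ 0 := Nat.cast_ne_zero.mpr (Nat.factorial_ne_zero _)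
    have hc3 : ((e ! : ℕ) : ℝ) ≠ 0 := Nat.cast_ne_zero.mpr (Nat.factorial_ne_zero _)
    have hp2 : ((2:ℝ)^e) ≠ 0 := by positivity
    field_simp
    push_cast; ring
  · obtain rfl : l = n := by omega
    rw [if_neg (lt_irrefl l)]
    unfold Fv Tv
    simp only [Nat.sub_self, show l+1 - (l+1) = 0 from by omega, Nat.factorial_zero,
      pow_zero, Nat.cast_one, show k + (l+1) = k + l + 1 from by omega]
    rw [dd_succ (k+l)]
    have hc1 : (((2*(l+1))! : ℕ) : ℝ) ≠ 0 := Nat.cast_ne_zero.mpr (Nat.factorial_ne_zero _)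
    have hc4 : (((2*l+1)! : ℕ) : ℝ) ≠ 0 := Nat.cast_ne_zero.mpr (Nat.factorial_ne_zero _)
    field_simp
    push_cast; ring

lemma T0 (a1 a2 b : ℝ) (m n l : ℕ) : Tv a1 a2 b m n 0 l = 0 := by
  simp [Tv]

lemma TR (a1 a2 b : ℝ) (m n k l : ℕ) (hk : k < m) :
    Tv a1 a2 b m n (k+1) l = Rv a1 a2 b m n k l := by
  obtain ⟨e, rfl⟩ : ∃ e, m = k+1+e := ⟨m - (k+1), by omega⟩
  unfold Tv Rv
  have e1 : (((2*(k+1+e))! : ℕ) : ℝ) = ((2*(k+e)+1)+1) * (((2*(k+e)+1)! : ℕ) : ℝ) := by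
    rw [show 2*(k+1+e) = (2*(k+e)+1)+1 from by ring, fact_cast_succ]; push_cast; ring
  have e2 : (((2*(k+1))! : ℕ) : ℝ) = ((2*k+1)+1) * (((2*k+1)! : ℕ) : ℝ) := by
    rw [show 2*(k+1) = (2*k+1)+1 from by ring, fact_cast_succ]; push_cast; ring
  rw [e1, e2]
  simp only [show k+1+e - (k+1) = e from by omega,
    show 2*(k+1+e) - 1 = 2*(k+e)+1 from by omega,
    show k+1+e-1-k = e from by omega,
    show 2*(k+1+l) - 1 = 2*(k+l)+1 from by omega,
    show k+1+l+1 = k+l+2 from by omega]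
  have hc1 : (((2*(k+e)+1)! : ℕ) : ℝ) ≠ 0 := Nat.cast_ne_zero.mpr (Nat.factorial_ne_zero _)
  have hc2 : (((2*k+1)! : ℕ) : ℝ) ≠ 0 := Nat.cast_ne_zero.mpr (Nat.factorial_ne_zero _)
  have hc3 : ((e ! : ℕ) : ℝ) ≠ 0 := Nat.cast_ne_zero.mpr (Nat.factorial_ne_zero _)
  have hp : ((2:ℝ)^e) ≠ 0 := by positivity
  push_cast
  field_simp
  ring

lemma master (a1 a2 b : ℝ) (m n : ℕ) :
    (∑ k ∈ Finset.range (m+1), ∑ l ∈ Finset.range (n+1+1), Fv a1 a2 b m (n+1) k l)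
      = (∑ k ∈ Finset.range m, ∑ l ∈ Finset.range (n+1), Rv a1 a2 b m n k l)
        + (2*n+1) * (1 + a2*b) *
          ∑ k ∈ Finset.range (m+1), ∑ l ∈ Finset.range (n+1), Fv a1 a2 b m n k l := by
  have step1 : ∀ k, ∑ l ∈ Finset.range (n+1+1), Fv a1 a2 b m (n+1) k l
      = (∑ l ∈ Finset.range (n+1), Tv a1 a2 b m n k l)
        + ((2*n+1) * ∑ l ∈ Finset.range (n+1), Fv a1 a2 b m n k l)
        + (2*n+1) * (a2*b) * ∑ l ∈ Finset.range (n+1), Fv a1 a2 b m n k l := by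
    intro k
    rw [Finset.sum_range_succ' (fun l => Fv a1 a2 b m (n+1) k l) (n+1), cell0]
    have h2 : ∑ l ∈ Finset.range (n+1), Fv a1 a2 b m (n+1) k (l+1)
        = ∑ l ∈ Finset.range (n+1), (Tv a1 a2 b m n k l
            + (if l < n then (2*n+1) * Fv a1 a2 b m n k (l+1) else 0)
            + (2*n+1) * (a2*b) * Fv a1 a2 b m n k l) :=
      Finset.sum_congr rfl fun l hl => cell a1 a2 b m n k l (by
        have := Finset.mem_range.mp hl; omega)
    rw [h2, Finset.sum_add_distrib, Finset.sum_add_distrib]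
    have h3 : ∑ l ∈ Finset.range (n+1), (if l < n then (2*n+1) * Fv a1 a2 b m n k (l+1) else 0)
        = ∑ l ∈ Finset.range n, (2*n+1) * Fv a1 a2 b m n k (l+1) := by
      rw [Finset.sum_range_succ, if_neg (lt_irrefl n), add_zero]
      exact Finset.sum_congr rfl fun l hl => if_pos (Finset.mem_range.mp hl)
    rw [h3, ← Finset.mul_sum, ← Finset.mul_sum]
    have h4 : (2*n+1 : ℝ) * ∑ l ∈ Finset.range (n+1), Fv a1 a2 b m n k l
        = (2*n+1) * ∑ l ∈ Finset.range n, Fv a1 a2 b m n k (l+1)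
          + (2*n+1) * Fv a1 a2 b m n k 0 := by
      rw [Finset.sum_range_succ' (fun l => Fv a1 a2 b m n k l) n]; ring
    rw [h4]; ring
  calc (∑ k ∈ Finset.range (m+1), ∑ l ∈ Finset.range (n+1+1), Fv a1 a2 b m (n+1) k l)
      = ∑ k ∈ Finset.range (m+1), ((∑ l ∈ Finset.range (n+1), Tv a1 a2 b m n k l)
          + ((2*n+1) * ∑ l ∈ Finset.range (n+1), Fv a1 a2 b m n k l)
          + (2*n+1) * (a2*b) * ∑ l ∈ Finset.range (n+1), Fv a1 a2 b m n k l) :=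
        Finset.sum_congr rfl fun k _ => step1 k
    _ = (∑ k ∈ Finset.range (m+1), ∑ l ∈ Finset.range (n+1), Tv a1 a2 b m n k l)
          + ((2*n+1) * ∑ k ∈ Finset.range (m+1), ∑ l ∈ Finset.range (n+1), Fv a1 a2 b m n k l)
          + (2*n+1) * (a2*b) * ∑ k ∈ Finset.range (m+1), ∑ l ∈ Finset.range (n+1), Fv a1 a2 b m n k l := by
        rw [Finset.sum_add_distrib, Finset.sum_add_distrib, ← Finset.mul_sum, ← Finset.mul_sum]
    _ = (∑ k ∈ Finset.range m, ∑ l ∈ Finset.range (n+1), Rv a1 a2 b m n k l)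
          + (2*n+1) * (1 + a2*b) *
            ∑ k ∈ Finset.range (m+1), ∑ l ∈ Finset.range (n+1), Fv a1 a2 b m n k l := by
        have hT : (∑ k ∈ Finset.range (m+1), ∑ l ∈ Finset.range (n+1), Tv a1 a2 b m n k l)
            = ∑ k ∈ Finset.range m, ∑ l ∈ Finset.range (n+1), Rv a1 a2 b m n k l := by
          rw [Finset.sum_range_succ' (fun k => ∑ l ∈ Finset.range (n+1), Tv a1 a2 b m n k l) m]
          have hz : ∑ l ∈ Finset.range (n+1), Tv a1 a2 b m n 0 l = 0 := by
            simp [T0]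
          rw [hz, add_zero]
          exact Finset.sum_congr rfl fun k hk => Finset.sum_congr rfl fun l _ =>
            TR a1 a2 b m n k l (Finset.mem_range.mp hk)
        rw [hT]; ring

lemma ptw (b a1 a2 : ℝ) (ha1 : 0 ≤ a1) (ha2 : 0 ≤ a2) (M A B D : ℝ) (k l : ℕ) :
    M * (Real.sqrt (a1*a2) * b) *
      (A * B * D * b ^ (k + l + 1) * (Real.sqrt a1 * a1 ^ k) * (Real.sqrt a2 * a2 ^ l))
      = M * A * B * D * b ^ (k + l + 2) * a1 ^ (k+1) * a2 ^ (l+1) := by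
  rw [Real.sqrt_mul ha1]
  have h1 := Real.mul_self_sqrt ha1
  have h2 := Real.mul_self_sqrt ha2
  linear_combination (M * b^(k+l+2) * A * B * D * (Real.sqrt a2 * Real.sqrt a2) * a1^k * a2^l) * h1
    + (M * b^(k+l+2) * A * B * D * a1 * a1^k * a2^l) * h2

/-- The limiting moments `M_{K,L}` of the two-group Curie–Weiss model satisfy, for even
`K, L`, the Gaussian moment recursion
`M_{K,L+2} = K·M_{1,1}·M_{K−1,L+1} + (L+1)·M_{0,2}·M_{K,L}`,
where `M_{1,1} = √(α₁α₂)·b` and `M_{0,2} = 1 + α₂·b`. -/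
theorem Mlim_recursion (a1 a2 b : ℝ) (ha1 : 0 ≤ a1) (ha2 : 0 ≤ a2) (hb : 0 ≤ b)
    (K L : ℕ) (hK : Even K) (hL : Even L) :
    Mlim a1 a2 b K (L + 2) =
      K * (Real.sqrt (a1 * a2) * b) * Mlim a1 a2 b (K - 1) (L + 1) +
        (L + 1) * (1 + a2 * b) * Mlim a1 a2 b K L := by
  obtain ⟨m, rfl⟩ := hK
  obtain ⟨n, rfl⟩ := hL
  rw [show m + m = 2 * m from by ring, show n + n = 2 * n from by ring]
  have e1 : Mlim a1 a2 b (2*m) (2*n+2)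
      = ∑ k ∈ Finset.range (m+1), ∑ l ∈ Finset.range (n+1+1), Fv a1 a2 b m (n+1) k l := by
    rw [Mlim, if_pos ⟨⟨m, two_mul m⟩, ⟨n+1, by ring⟩⟩]
    simp only [show 2*m/2 = m from by omega, show (2*n+2)/2 = n+1 from by omega]
    refine Finset.sum_congr rfl fun k _ => Finset.sum_congr rfl fun l _ => ?_
    unfold Fv
    rw [show 2*(n+1) = 2*n+2 from by ring]
  have e2 : Mlim a1 a2 b (2*m) (2*n)
      = ∑ k ∈ Finset.range (m+1), ∑ l ∈ Finset.range (n+1), Fv a1 a2 b m n k l := by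
    rw [Mlim, if_pos ⟨⟨m, two_mul m⟩, ⟨n, two_mul n⟩⟩]
    simp only [show 2*m/2 = m from by omega, show 2*n/2 = n from by omega]
    rfl
  rcases Nat.eq_zero_or_pos m with rfl | hm
  · rw [e1, e2, master]
    simp only [Finset.range_zero, Finset.sum_empty, zero_add]
    push_cast
    ring
  · have e3 : (↑(2*m) : ℝ) * (Real.sqrt (a1*a2) * b) * Mlim a1 a2 b (2*m - 1) (2*n+1)
        = ∑ k ∈ Finset.range m, ∑ l ∈ Finset.range (n+1), Rv a1 a2 b m n k l := by
      rw [Mlim, if_neg (by rintro ⟨-, r, hr⟩; omega)]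
      simp only [show (2*m - 1 - 1)/2 = m - 1 from by omega,
        show (2*n+1-1)/2 = n from by omega,
        show m - 1 + 1 = m from by omega]
      rw [Finset.mul_sum]
      refine Finset.sum_congr rfl fun k hk => ?_
      rw [Finset.mul_sum]
      refine Finset.sum_congr rfl fun l _ => ?_
      rw [ptw b a1 a2 ha1 ha2]
      unfold Rv
      push_cast
      ring
    rw [e1, e2, e3, master]
    push_cast
    ring
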